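/- If ρ is a good volume potential on V and τ is any 3-chain on V, then ρ(∂τ) ≤ ‖τ‖₁, where ρ(∂τ) denotes the ℤ-linear extension of ρ to 2-chains. -/

import Mathlib

noncomputable section

/-- A *volume potential* on a vertex type `V` assigns a rational number to each
ordered triple of distinct vertices, with `ρ(A,B,C) = ρ(B,C,A) = -ρ(A,C,B)`. -/
structure VolumePotential (V : Type*) where
  ρ : V → V → V → ℚ
  cyclic : ∀ A B C : V, A ≠ B → A ≠ C → B ≠ C → ρ A B C = ρ B C A
  antisymm : ∀ A B C : V, A ≠ B → A ≠ C → B ≠ C → ρ A B C = -ρ A C B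

variable {V : Type*} [DecidableEq V]

/-- The volume form of a volume potential:
`vol_ρ(A,B,C,D) = ρ(B,C,D) − ρ(A,C,D) + ρ(A,B,D) − ρ(A,B,C)`. -/
def VolumePotential.vol (P : VolumePotential V) (A B C D : V) : ℚ :=
  P.ρ B C D - P.ρ A C D + P.ρ A B D - P.ρ A B C

/-- A volume potential is *good* if its volume form assigns every ordered
4-tuple of distinct vertices volume at most 1. -/
def VolumePotential.Good (P : VolumePotential V) : Prop :=
  ∀ A B C D : V, A ≠ B → A ≠ C → A ≠ D → B ≠ C → B ≠ D → C ≠ D →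
    P.vol A B C D ≤ 1

/-- A 2-chain on `V`: a finitely supported alternating integer-valued function on
ordered triples (this encodes a finitely supported `ℤ`-linear combination of
oriented triangles, an oriented triangle being an ordered triple of distinct
vertices up to even permutation, with orientation reversal acting as negation). -/
def IsChain2 (c : V → V → V → ℤ) : Prop :=
  (∀ A B C, c A B C = -c B A C) ∧ (∀ A B C, c A B C = -c A C B) ∧
  {t : V × V × V | c t.1 t.2.1 t.2.2 ≠ 0}.Finite

/-- A 3-chain on `V`: a finitely supported alternating integer-valued function on
ordered 4-tuples (a finitely supported `ℤ`-linear combination of oriented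
tetrahedra). -/
def IsChain3 (c : V → V → V → V → ℤ) : Prop :=
  (∀ A B C D, c A B C D = -c B A C D) ∧ (∀ A B C D, c A B C D = -c A C B D) ∧
  (∀ A B C D, c A B C D = -c A B D C) ∧
  {t : V × V × V × V | c t.1 t.2.1 t.2.2.1 t.2.2.2 ≠ 0}.Finite

/-- The boundary of a 2-chain, a 1-chain: `∂[A,B,C] = [B,C] − [A,C] + [A,B]`,
extended `ℤ`-linearly. -/
def bdry2 (c : V → V → V → ℤ) : V → V → ℤ := fun B C => ∑ᶠ A, c A B C

/-- The boundary of a 3-chain, a 2-chain: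
`∂[A,B,C,D] = [B,C,D] − [A,C,D] + [A,B,D] − [A,B,C]`, extended `ℤ`-linearly. -/
def bdry3 (c : V → V → V → V → ℤ) : V → V → V → ℤ := fun B C D => ∑ᶠ A, c A B C D

/-- The `ℤ`-linear extension of a volume potential to 2-chains.  (Each oriented
triangle of the chain occurs as 6 ordered triples, 3 with each sign, whence the
division by 6.) -/
def VolumePotential.eval2 (P : VolumePotential V) (c : V → V → V → ℤ) : ℚ :=
  (∑ᶠ t : V × V × V, (c t.1 t.2.1 t.2.2 : ℚ) * P.ρ t.1 t.2.1 t.2.2) / 6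

/-- The `ℤ`-linear extension of the volume form to 3-chains. -/
def VolumePotential.eval3 (P : VolumePotential V) (c : V → V → V → V → ℤ) : ℚ :=
  (∑ᶠ t : V × V × V × V,
    (c t.1 t.2.1 t.2.2.1 t.2.2.2 : ℚ) * P.vol t.1 t.2.1 t.2.2.1 t.2.2.2) / 24

/-- The ℓ¹-norm of a 3-chain: the sum of the absolute values of its coefficients. -/
def l1norm3 (c : V → V → V → V → ℤ) : ℚ :=
  (∑ᶠ t : V × V × V × V, (|c t.1 t.2.1 t.2.2.1 t.2.2.2| : ℚ)) / 24


/-! ### Auxiliary material -/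

section Aux

variable {τ : V → V → V → V → ℤ}

lemma chain3_swap12 (hτ : IsChain3 τ) (A B C D : V) : τ B A C D = -τ A B C D := by
  have := hτ.1 A B C D; omega

lemma chain3_cyc3 (hτ : IsChain3 τ) (A B C D : V) : τ B C A D = τ A B C D := by
  have h1 := hτ.2.1 B A C D
  have h2 := hτ.1 A B C D
  omega

lemma chain3_cyc4 (hτ : IsChain3 τ) (A B C D : V) : τ B C D A = -τ A B C D := by
  have h1 := hτ.2.2.1 B C A D
  have h2 := chain3_cyc3 hτ A B C D
  omega

lemma chain3_ne (hτ : IsChain3 τ) {A B C D : V} (h : τ A B C D ≠ 0) :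
    A ≠ B ∧ A ≠ C ∧ A ≠ D ∧ B ≠ C ∧ B ≠ D ∧ C ≠ D := by
  refine ⟨?_, ?_, ?_, ?_, ?_, ?_⟩
  · rintro rfl; exact h (by have := hτ.1 A A C D; omega)
  · rintro rfl; exact h (by have h1 := hτ.2.1 A B A D; have h2 := hτ.1 A A B D; omega)
  · rintro rfl
    refine h ?_
    have h1 := hτ.2.2.1 A B C A
    have h2 := hτ.2.1 A B A C
    have h3 := hτ.1 A A B C
    omega
  · rintro rfl; exact h (by have := hτ.2.1 A B B D; omega)
  · rintro rfl; exact h (by have h1 := hτ.2.2.1 A B C B; have h2 := hτ.2.1 A B B C; omega)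
  · rintro rfl; exact h (by have := hτ.2.2.1 A B C C; omega)

lemma vol_swap12 (P : VolumePotential V) {A B C D : V} (hAB : A ≠ B) (hAC : A ≠ C)
    (hAD : A ≠ D) (hBC : B ≠ C) (hBD : B ≠ D) (hCD : C ≠ D) :
    P.vol B A C D = -P.vol A B C D := by
  have h1 : P.ρ B A D = -P.ρ A B D := by
    rw [P.cyclic B A D hAB.symm hBD hAD, P.antisymm A D B hAD hAB hBD.symm]
  have h2 : P.ρ B A C = -P.ρ A B C := by
    rw [P.cyclic B A C hAB.symm hBC hAC, P.antisymm A C B hAC hAB hBC.symm]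
  simp only [VolumePotential.vol]
  rw [h1, h2]; ring

lemma abs_vol_le (P : VolumePotential V) (hP : P.Good) {A B C D : V} (hAB : A ≠ B)
    (hAC : A ≠ C) (hAD : A ≠ D) (hBC : B ≠ C) (hBD : B ≠ D) (hCD : C ≠ D) :
    |P.vol A B C D| ≤ 1 := by
  rw [abs_le]
  constructor
  · have h := hP B A C D hAB.symm hBC hBD hAC hAD hCD
    rw [vol_swap12 P hAB hAC hAD hBC hBD hCD] at h
    linarith
  · exact hP A B C D hAB hAC hAD hBC hBD hCD

/-- coefficient times `ρ` of the last three vertices -/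
def gBCD (P : VolumePotential V) (τ : V → V → V → V → ℤ) : V × V × V × V → ℚ :=
  fun t => (τ t.1 t.2.1 t.2.2.1 t.2.2.2 : ℚ) * P.ρ t.2.1 t.2.2.1 t.2.2.2

def gACD (P : VolumePotential V) (τ : V → V → V → V → ℤ) : V × V × V × V → ℚ :=
  fun t => (τ t.1 t.2.1 t.2.2.1 t.2.2.2 : ℚ) * P.ρ t.1 t.2.2.1 t.2.2.2

def gABD (P : VolumePotential V) (τ : V → V → V → V → ℤ) : V × V × V × V → ℚ :=
  fun t => (τ t.1 t.2.1 t.2.2.1 t.2.2.2 : ℚ) * P.ρ t.1 t.2.1 t.2.2.2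

def gABC (P : VolumePotential V) (τ : V → V → V → V → ℤ) : V × V × V × V → ℚ :=
  fun t => (τ t.1 t.2.1 t.2.2.1 t.2.2.2 : ℚ) * P.ρ t.1 t.2.1 t.2.2.1

/-- swap the first two coordinates -/
def e12 {V : Type*} : V × V × V × V ≃ V × V × V × V where
  toFun t := (t.2.1, t.1, t.2.2)
  invFun t := (t.2.1, t.1, t.2.2)
  left_inv t := rfl
  right_inv t := rfl

/-- cycle the first three coordinates: `(A,B,C,D) ↦ (B,C,A,D)` -/
def e3 {V : Type*} : V × V × V × V ≃ V × V × V × V where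
  toFun t := (t.2.1, t.2.2.1, t.1, t.2.2.2)
  invFun t := (t.2.2.1, t.1, t.2.1, t.2.2.2)
  left_inv t := rfl
  right_inv t := rfl

/-- cycle all four coordinates: `(A,B,C,D) ↦ (B,C,D,A)` -/
def e4 {V : Type*} : V × V × V × V ≃ V × V × V × V where
  toFun t := (t.2.1, t.2.2.1, t.2.2.2, t.1)
  invFun t := (t.2.2.2, t.1, t.2.1, t.2.2.1)
  left_inv t := rfl
  right_inv t := rfl

lemma support_fin (hτ : IsChain3 τ) (k : V × V × V × V → ℚ)
    (hk : ∀ t, τ t.1 t.2.1 t.2.2.1 t.2.2.2 = 0 → k t = 0) :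
    (Function.support k).Finite :=
  hτ.2.2.2.subset fun t ht h0 => ht (hk t h0)

lemma sum_gACD (P : VolumePotential V) (hτ : IsChain3 τ) :
    ∑ᶠ t, gACD P τ t = -∑ᶠ t, gBCD P τ t := by
  calc ∑ᶠ t, gACD P τ t = ∑ᶠ t, gACD P τ (e12 t) := (finsum_comp_equiv e12).symm
    _ = ∑ᶠ t, -(gBCD P τ t) := by
        apply finsum_congr
        rintro ⟨A, B, C, D⟩
        show ((τ B A C D : ℚ)) * P.ρ B C D = -(((τ A B C D : ℚ)) * P.ρ B C D)
        rw [chain3_swap12 hτ]; push_cast; ring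
    _ = -∑ᶠ t, gBCD P τ t := finsum_neg_distrib _

lemma sum_gABD (P : VolumePotential V) (hτ : IsChain3 τ) :
    ∑ᶠ t, gABD P τ t = ∑ᶠ t, gBCD P τ t := by
  calc ∑ᶠ t, gABD P τ t = ∑ᶠ t, gABD P τ (e3 t) := (finsum_comp_equiv e3).symm
    _ = ∑ᶠ t, gBCD P τ t := by
        apply finsum_congr
        rintro ⟨A, B, C, D⟩
        show ((τ B C A D : ℚ)) * P.ρ B C D = ((τ A B C D : ℚ)) * P.ρ B C D
        rw [chain3_cyc3 hτ]

lemma sum_gABC (P : VolumePotential V) (hτ : IsChain3 τ) :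
    ∑ᶠ t, gABC P τ t = -∑ᶠ t, gBCD P τ t := by
  calc ∑ᶠ t, gABC P τ t = ∑ᶠ t, gABC P τ (e4 t) := (finsum_comp_equiv e4).symm
    _ = ∑ᶠ t, -(gBCD P τ t) := by
        apply finsum_congr
        rintro ⟨A, B, C, D⟩
        show ((τ B C D A : ℚ)) * P.ρ B C D = -(((τ A B C D : ℚ)) * P.ρ B C D)
        rw [chain3_cyc4 hτ]; push_cast; ring
    _ = -∑ᶠ t, gBCD P τ t := finsum_neg_distrib _

lemma eval2_bdry3 (P : VolumePotential V) (hτ : IsChain3 τ) :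
    P.eval2 (bdry3 τ) = (∑ᶠ t : V × V × V × V, gBCD P τ t) / 6 := by
  unfold VolumePotential.eval2 bdry3
  congr 1
  have hinner : ∀ B C D : V, (Function.support fun A => τ A B C D).Finite := by
    intro B C D
    have hset : (Function.support fun A => τ A B C D) =
        (fun A => ((A, B, C, D) : V × V × V × V)) ⁻¹'
          {t : V × V × V × V | τ t.1 t.2.1 t.2.2.1 t.2.2.2 ≠ 0} := rfl
    rw [hset]
    exact Set.Finite.preimage
      (Set.injOn_of_injective fun a b hab => congrArg Prod.fst hab) hτ.2.2.2
  have step1 : ∀ B C D : V,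
      ((∑ᶠ A, τ A B C D : ℤ) : ℚ) * P.ρ B C D = ∑ᶠ A, (τ A B C D : ℚ) * P.ρ B C D := by
    intro B C D
    have hmap := (Int.castAddHom ℚ).map_finsum (f := fun A => τ A B C D) (hinner B C D)
    simp only [Int.coe_castAddHom] at hmap
    rw [hmap]
    exact finsum_mul _ _
  have hgfin : (Function.support (gBCD P τ)).Finite :=
    support_fin hτ _ (by intro t h0; simp [gBCD, h0])
  have hF' : (Function.support fun q : (V × V × V) × V => gBCD P τ (q.2, q.1)).Finite := by
    have hset : (Function.support fun q : (V × V × V) × V => gBCD P τ (q.2, q.1)) =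
        (fun q : (V × V × V) × V => ((q.2, q.1) : V × V × V × V)) ⁻¹'
          Function.support (gBCD P τ) := rfl
    rw [hset]
    exact Set.Finite.preimage
      (Set.injOn_of_injective fun a b hab => by
        have h1 := congrArg Prod.fst hab
        have h2 := congrArg Prod.snd hab
        exact Prod.ext h2 h1) hgfin
  calc ∑ᶠ p : V × V × V, ((∑ᶠ A, τ A p.1 p.2.1 p.2.2 : ℤ) : ℚ) * P.ρ p.1 p.2.1 p.2.2
      = ∑ᶠ p : V × V × V, ∑ᶠ A, gBCD P τ (A, p) :=
        finsum_congr fun p => step1 p.1 p.2.1 p.2.2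
    _ = ∑ᶠ q : (V × V × V) × V, gBCD P τ (q.2, q.1) := (finsum_curry _ hF').symm
    _ = ∑ᶠ t : V × V × V × V, gBCD P τ t := finsum_comp_equiv (Equiv.prodComm (V × V × V) V)

end Aux

/-- If `ρ` is a good volume potential and `τ` is any 3-chain, then
`ρ(∂τ) ≤ ‖τ‖₁`. -/
theorem good_bdry_le_l1norm {V : Type*} [DecidableEq V] (P : VolumePotential V)
    (hP : P.Good) (τ : V → V → V → V → ℤ) (hτ : IsChain3 τ) :
    P.eval2 (bdry3 τ) ≤ l1norm3 τ := by
  obtain ⟨hAB, hAC, hAD, hfin4⟩ := id hτ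
  have hgfin : (Function.support (gBCD P τ)).Finite :=
    support_fin hτ _ (by intro t h0; simp [gBCD, h0])
  have hACDfin : (Function.support (gACD P τ)).Finite :=
    support_fin hτ _ (by intro t h0; simp [gACD, h0])
  have hABDfin : (Function.support (gABD P τ)).Finite :=
    support_fin hτ _ (by intro t h0; simp [gABD, h0])
  have hABCfin : (Function.support (gABC P τ)).Finite :=
    support_fin hτ _ (by intro t h0; simp [gABC, h0])
  -- Stokes : eval3 equals 4 times the basic sum
  have key2 : ∑ᶠ t : V × V × V × V,
      (τ t.1 t.2.1 t.2.2.1 t.2.2.2 : ℚ) * P.vol t.1 t.2.1 t.2.2.1 t.2.2.2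
      = 4 * ∑ᶠ t, gBCD P τ t := by
    have h1 : ∀ t : V × V × V × V,
        (τ t.1 t.2.1 t.2.2.1 t.2.2.2 : ℚ) * P.vol t.1 t.2.1 t.2.2.1 t.2.2.2
        = (gBCD P τ t - gACD P τ t) + (gABD P τ t - gABC P τ t) := by
      intro t
      simp only [gBCD, gACD, gABD, gABC, VolumePotential.vol]
      ring
    rw [finsum_congr h1,
      finsum_add_distrib ((hgfin.union hACDfin).subset (Function.support_sub _ _))
        ((hABDfin.union hABCfin).subset (Function.support_sub _ _)),
      finsum_sub_distrib hgfin hACDfin, finsum_sub_distrib hABDfin hABCfin,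
      sum_gACD P hτ, sum_gABD P hτ, sum_gABC P hτ]
    ring
  -- termwise bound
  have key3 : ∑ᶠ t : V × V × V × V,
      (τ t.1 t.2.1 t.2.2.1 t.2.2.2 : ℚ) * P.vol t.1 t.2.1 t.2.2.1 t.2.2.2
      ≤ ∑ᶠ t : V × V × V × V, (|τ t.1 t.2.1 t.2.2.1 t.2.2.2| : ℚ) := by
    rw [finsum_eq_sum_of_support_subset _
        (s := hfin4.toFinset) (fun t ht => by
          simp only [Set.Finite.coe_toFinset, Set.mem_setOf_eq]
          intro h0
          exact ht (by simp [h0])),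
      finsum_eq_sum_of_support_subset _
        (s := hfin4.toFinset) (fun t ht => by
          simp only [Set.Finite.coe_toFinset, Set.mem_setOf_eq]
          intro h0
          exact ht (by simp [h0]))]
    apply Finset.sum_le_sum
    intro t _
    by_cases h0 : τ t.1 t.2.1 t.2.2.1 t.2.2.2 = 0
    · simp [h0]
    · obtain ⟨h1, h2, h3, h4, h5, h6⟩ := chain3_ne hτ h0
      calc (τ t.1 t.2.1 t.2.2.1 t.2.2.2 : ℚ) * P.vol t.1 t.2.1 t.2.2.1 t.2.2.2
          ≤ |(τ t.1 t.2.1 t.2.2.1 t.2.2.2 : ℚ) * P.vol t.1 t.2.1 t.2.2.1 t.2.2.2| :=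
            le_abs_self _
        _ = |(τ t.1 t.2.1 t.2.2.1 t.2.2.2 : ℚ)| * |P.vol t.1 t.2.1 t.2.2.1 t.2.2.2| :=
            abs_mul _ _
        _ ≤ |(τ t.1 t.2.1 t.2.2.1 t.2.2.2 : ℚ)| * 1 :=
            mul_le_mul_of_nonneg_left (abs_vol_le P hP h1 h2 h3 h4 h5 h6) (abs_nonneg _)
        _ = (|τ t.1 t.2.1 t.2.2.1 t.2.2.2| : ℚ) := by
            push_cast; ring
  rw [eval2_bdry3 P hτ]
  unfold l1norm3
  linarith
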